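/- arXiv:2605.11503 — 3 statements merged into one kernel-verified Lean document; each statement's English description precedes it below -/
import Mathlib

section
/- Let G' = (P ∪ B, E) be a finite galactic graph with a black hole b ∈ B, and let S, T ⊆ P with |S| = |T| = n and no black hole in N[S ∪ T]. Suppose there is a plan for Galactic 1IUMAPF from S to T in G'. Then there is a plan Q'_0, …, Q'_{ℓ'} from S to T in G' satisfying both: (1) no two consecutive configurations both have an agent in N(b); and (2) for every step t ∈ [1, ℓ'], |S^pro_t| + |S^abs_t| ≤ 1, where S^pro_t = {i : Q'_{t-1}[i] = b and Q'_t[i] ≠ b} is the set of agents leaving b at step t and S^abs_t = {i : Q'_t[i] = b and Q'_{t-1}[i] ≠ b} is the set of agents entering b at step t. -/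
open SimpleGraph

/-- A configuration of `n` agents is distance-`r` independent if distinct agents are
at graph distance at least `r + 1`. A plan for `rIUMAPF` of length `ℓ` from `S` to `T`:
the occupied sets at times `0` and `ℓ` are `S` and `T`, every configuration up to time `ℓ`
is distance-`r` independent, and each agent moves within closed neighborhoods. -/
def IsPlan {V : Type*} (G : SimpleGraph V) (r n ℓ : ℕ) (Q : ℕ → Fin n → V)
    (S T : Set V) : Prop :=
  Set.range (Q 0) = S ∧ Set.range (Q ℓ) = T ∧
  (∀ k ≤ ℓ, ∀ i j : Fin n, i ≠ j → r + 1 ≤ G.dist (Q k i) (Q k j)) ∧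
  (∀ k < ℓ, ∀ i : Fin n, Q (k + 1) i = Q k i ∨ G.Adj (Q k i) (Q (k + 1) i))

/-- Galactic distance-`r` independence: no two distinct agents on planets are within
distance `r` in the planet-induced subgraph (`edist = ⊤` when unreachable). -/
def GalIndep {V : Type*} (G : SimpleGraph V) (P : Set V) (r : ℕ) {n : ℕ}
    (Q : Fin n → V) : Prop :=
  ∀ i j : Fin n, i ≠ j → ∀ (hi : Q i ∈ P) (hj : Q j ∈ P),
    (r : ℕ∞) < (G.induce P).edist ⟨Q i, hi⟩ ⟨Q j, hj⟩

/-- A plan for Galactic `rIUMAPF` from `S` to `T`. -/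
def GalPlan {V : Type*} (G : SimpleGraph V) (P : Set V) (r n : ℕ)
    (S T : Set V) : Prop :=
  ∃ (ℓ : ℕ) (Q : ℕ → Fin n → V),
    Set.range (Q 0) = S ∧ Set.range (Q ℓ) = T ∧
    (∀ k ≤ ℓ, GalIndep G P r (Q k)) ∧
    (∀ k < ℓ, ∀ i : Fin n, Q (k + 1) i = Q k i ∨ G.Adj (Q k i) (Q (k + 1) i))

/-- Closed neighborhood `N[X]` of a set of vertices. -/
def nclSet {V : Type*} (G : SimpleGraph V) (X : Set V) : Set V :=
  X ∪ {v | ∃ u ∈ X, G.Adj u v}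

/-- Contraction of a vertex set `W` to a single new vertex (`Sum.inr ()`), which is
adjacent exactly to the vertices of `N(W) ∖ W`; everything else is unchanged. -/
def contractSet {V : Type*} (G : SimpleGraph V) (W : Set V) :
    SimpleGraph ({v : V // v ∉ W} ⊕ Unit) where
  Adj x y :=
    match x, y with
    | Sum.inl u, Sum.inl v => G.Adj u.1 v.1
    | Sum.inl u, Sum.inr _ => ∃ w ∈ W, G.Adj u.1 w
    | Sum.inr _, Sum.inl v => ∃ w ∈ W, G.Adj v.1 w
    | Sum.inr _, Sum.inr _ => False
  symm := by
    constructor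
    rintro (u | u) (v | v) h
    · exact h.symm
    · exact h
    · exact h
    · exact h
  loopless := by
    constructor
    rintro (u | u) h
    · exact G.loopless.irrefl u.1 h
    · exact h

/-- The planets of the contracted galactic graph: the surviving copies of planets. -/
def contractPlanets {V : Type*} (P W : Set V) : Set ({v : V // v ∉ W} ⊕ Unit) :=
  {x | ∃ u : {v : V // v ∉ W}, u.1 ∈ P ∧ x = Sum.inl u}

/-- A subset of `V ∖ W` viewed inside the contracted vertex set. -/
def liftSet {V : Type*} (W X : Set V) : Set ({v : V // v ∉ W} ⊕ Unit) :=
  {x | ∃ u : {v : V // v ∉ W}, u.1 ∈ X ∧ x = Sum.inl u}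

/-- The infinite grid graph on `ℤ × ℤ`: adjacency is unit `L1` distance. -/
def gridGraph : SimpleGraph (ℤ × ℤ) where
  Adj p q := |p.1 - q.1| + |p.2 - q.2| = 1
  symm := by
    constructor
    intro p q h
    rw [abs_sub_comm q.1, abs_sub_comm q.2]
    exact h
  loopless := by
    constructor
    intro p h
    simp at h



section BHAux

variable {V : Type*} {n : ℕ}

/-- Parametric configuration: agents in `s` sit at `b`, the rest follow `q`. -/
def cfgQ (b : V) (s : Finset (Fin n)) (q : Fin n → V) : Fin n → V :=
  fun i => if i ∈ s then b else q i

/-- A "good" step for our plan: legal moves, at most one transfer at `b`,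
and one of the two configurations clear of `N(b)`. -/
def GStep (G : SimpleGraph V) (b : V) (x y : Fin n → V) : Prop :=
  (∀ i, y i = x i ∨ G.Adj (x i) (y i)) ∧
  ({i : Fin n | x i = b ∧ y i ≠ b}.ncard + {i : Fin n | y i = b ∧ x i ≠ b}.ncard ≤ 1) ∧
  (Set.range x ∩ G.neighborSet b = ∅ ∨ Set.range y ∩ G.neighborSet b = ∅)

/-- Reachability by good steps through galactic-independent configurations. -/
def GReach (G : SimpleGraph V) (P : Set V) (b : V) (x y : Fin n → V) : Prop :=
  ∃ (m : ℕ) (f : ℕ → Fin n → V), f 0 = x ∧ f m = y ∧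
    (∀ k < m, GStep G b (f k) (f (k + 1))) ∧ (∀ k ≤ m, GalIndep G P 1 (f k))

variable {G : SimpleGraph V} {P : Set V} {b : V}

lemma GReach.refl {x : Fin n → V} (hx : GalIndep G P 1 x) : GReach G P b x x :=
  ⟨0, fun _ => x, rfl, rfl, fun k hk => absurd hk (Nat.not_lt_zero k), fun _ _ => hx⟩

lemma GReach.single {x y : Fin n → V} (h : GStep G b x y)
    (hx : GalIndep G P 1 x) (hy : GalIndep G P 1 y) : GReach G P b x y := by
  refine ⟨1, fun k => if k = 0 then x else y, by simp, by simp, ?_, ?_⟩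
  · intro k hk
    have hk0 : k = 0 := by omega
    subst hk0
    simpa using h
  · intro k hk
    by_cases h0 : k = 0
    · subst h0; simpa using hx
    · simp only [if_neg h0]; exact hy

lemma GReach.trans {x y z : Fin n → V} (h1 : GReach G P b x y) (h2 : GReach G P b y z) :
    GReach G P b x z := by
  obtain ⟨m1, f1, h10, h1m, h1s, h1i⟩ := h1
  obtain ⟨m2, f2, h20, h2m, h2s, h2i⟩ := h2
  refine ⟨m1 + m2, fun k => if k < m1 then f1 k else f2 (k - m1), ?_, ?_, ?_, ?_⟩
  · by_cases h : 0 < m1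
    · simpa [h] using h10
    · have hm : m1 = 0 := by omega
      subst hm
      simp only [Nat.lt_irrefl, if_neg (lt_irrefl 0), Nat.sub_zero]
      rw [h20, ← h1m]; exact h10
  · have hlt : ¬ (m1 + m2 < m1) := by omega
    simp only [if_neg hlt]
    rw [Nat.add_sub_cancel_left]
    exact h2m
  · intro k hk
    by_cases hk1 : k + 1 < m1
    · have hkk : k < m1 := by omega
      simp only [if_pos hkk, if_pos hk1]
      exact h1s k (by omega)
    · by_cases hkk : k < m1
      · have hke : k + 1 = m1 := by omega
        simp only [if_pos hkk, if_neg hk1]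
        have e : f2 (k + 1 - m1) = f1 (k + 1) := by
          rw [hke, Nat.sub_self, h20, ← h1m]
        rw [e]
        exact h1s k (by omega)
      · simp only [if_neg hkk, if_neg hk1]
        have e : k + 1 - m1 = (k - m1) + 1 := by omega
        rw [e]
        exact h2s (k - m1) (by omega)
  · intro k hk
    by_cases hkk : k < m1
    · simp only [if_pos hkk]; exact h1i k (by omega)
    · simp only [if_neg hkk]; exact h2i (k - m1) (by omega)

lemma indep_cfg (hb : b ∉ P) {q : Fin n → V} (h : GalIndep G P 1 q) (s : Finset (Fin n)) :
    GalIndep G P 1 (cfgQ b s q) := by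
  intro i j hij hi hj
  have hiS : i ∉ s := by
    intro h'
    apply hb
    simpa [cfgQ, h'] using hi
  have hjS : j ∉ s := by
    intro h'
    apply hb
    simpa [cfgQ, h'] using hj
  have ei : cfgQ b s q i = q i := by simp [cfgQ, hiS]
  have ej : cfgQ b s q j = q j := by simp [cfgQ, hjS]
  have hi' : q i ∈ P := ei ▸ hi
  have hj' : q j ∈ P := ej ▸ hj
  have key := h i j hij hi' hj'
  have e1 : (⟨cfgQ b s q i, hi⟩ : {x // x ∈ P}) = ⟨q i, hi'⟩ := Subtype.ext ei
  have e2 : (⟨cfgQ b s q j, hj⟩ : {x // x ∈ P}) = ⟨q j, hj'⟩ := Subtype.ext ej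
  rw [e1, e2]
  exact key

end BHAux

section BHSteps

variable {V : Type*} {n : ℕ} {G : SimpleGraph V} {b : V} {q q' : Fin n → V}

/-- All agents outside `s` perform their scheduled move; agents in `s` stay at `b`. -/
lemma gstep_fwd (hmv : ∀ i, q' i = q i ∨ G.Adj (q i) (q' i)) (s : Finset (Fin n))
    (hq : ∀ i, i ∉ s → q i ≠ b) (hq' : ∀ i, i ∉ s → q' i ≠ b)
    (hsp : (∀ i, i ∉ s → ¬ G.Adj b (q i)) ∨ (∀ i, i ∉ s → ¬ G.Adj b (q' i))) :
    GStep G b (cfgQ b s q) (cfgQ b s q') := by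
  refine ⟨?_, ?_, ?_⟩
  · intro i
    by_cases hi : i ∈ s
    · left; simp [cfgQ, hi]
    · simpa [cfgQ, hi] using hmv i
  · have e1 : {i : Fin n | cfgQ b s q i = b ∧ cfgQ b s q' i ≠ b} = ∅ := by
      apply Set.eq_empty_iff_forall_notMem.mpr
      rintro i ⟨h1, h2⟩
      by_cases hi : i ∈ s
      · exact h2 (by simp [cfgQ, hi])
      · exact hq i hi (by simpa [cfgQ, hi] using h1)
    have e2 : {i : Fin n | cfgQ b s q' i = b ∧ cfgQ b s q i ≠ b} = ∅ := by
      apply Set.eq_empty_iff_forall_notMem.mpr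
      rintro i ⟨h1, h2⟩
      by_cases hi : i ∈ s
      · exact h2 (by simp [cfgQ, hi])
      · exact hq' i hi (by simpa [cfgQ, hi] using h1)
    rw [e1, e2]; simp
  · rcases hsp with h | h
    · left
      apply Set.eq_empty_iff_forall_notMem.mpr
      rintro v ⟨⟨i, rfl⟩, hv⟩
      rw [SimpleGraph.mem_neighborSet] at hv
      by_cases hi : i ∈ s
      · rw [(by simp [cfgQ, hi] : cfgQ b s q i = b)] at hv
        exact G.loopless.irrefl b hv
      · rw [(by simp [cfgQ, hi] : cfgQ b s q i = q i)] at hv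
        exact h i hi hv
    · right
      apply Set.eq_empty_iff_forall_notMem.mpr
      rintro v ⟨⟨i, rfl⟩, hv⟩
      rw [SimpleGraph.mem_neighborSet] at hv
      by_cases hi : i ∈ s
      · rw [(by simp [cfgQ, hi] : cfgQ b s q' i = b)] at hv
        exact G.loopless.irrefl b hv
      · rw [(by simp [cfgQ, hi] : cfgQ b s q' i = q' i)] at hv
        exact h i hi hv

/-- Reverse-move all agents outside `s` from their `q'` positions back to `q`,
while agent `a` (currently on the sphere at `q' a`) enters the black hole. -/
lemma gstep_enter (hmv : ∀ i, q' i = q i ∨ G.Adj (q i) (q' i)) (s : Finset (Fin n))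
    (a : Fin n) (ha : a ∉ s) (hadj : G.Adj b (q' a))
    (hq : ∀ i, i ∉ s → q i ≠ b) (hq' : ∀ i, i ∉ s → q' i ≠ b)
    (hsp : ∀ i, i ∉ s → ¬ G.Adj b (q i)) :
    GStep G b (cfgQ b s q') (cfgQ b (insert a s) q) := by
  refine ⟨?_, ?_, ?_⟩
  · intro i
    by_cases hi : i ∈ s
    · left
      simp [cfgQ, hi, Finset.mem_insert_of_mem hi]
    · by_cases hia : i = a
      · subst hia
        right
        rw [(by simp [cfgQ, hi] : cfgQ b s q' i = q' i),
          (by simp [cfgQ] : cfgQ b (insert i s) q i = b)]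
        exact hadj.symm
      · have hin : i ∉ insert a s := by simp [hia, hi]
        rcases hmv i with h | h
        · left; simp [cfgQ, hi, hin, h]
        · right; simpa [cfgQ, hi, hin] using h.symm
  · have e1 : {i : Fin n | cfgQ b s q' i = b ∧ cfgQ b (insert a s) q i ≠ b} = ∅ := by
      apply Set.eq_empty_iff_forall_notMem.mpr
      rintro i ⟨h1, h2⟩
      by_cases hi : i ∈ s
      · exact h2 (by simp [cfgQ, Finset.mem_insert_of_mem hi])
      · exact hq' i hi (by simpa [cfgQ, hi] using h1)
    have e2 : {i : Fin n | cfgQ b (insert a s) q i = b ∧ cfgQ b s q' i ≠ b} = {a} := by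
      ext i
      simp only [Set.mem_setOf_eq, Set.mem_singleton_iff]
      constructor
      · rintro ⟨h1, h2⟩
        by_cases hi : i ∈ s
        · exact absurd (by simp [cfgQ, hi] : cfgQ b s q' i = b) h2
        · by_cases hia : i = a
          · exact hia
          · exact absurd (by simpa [cfgQ, Finset.mem_insert, hia, hi] using h1) (hq i hi)
      · rintro rfl
        refine ⟨by simp [cfgQ], ?_⟩
        rw [(by simp [cfgQ, ha] : cfgQ b s q' i = q' i)]
        exact hadj.ne'
    rw [e1, e2]
    simp
  · right
    apply Set.eq_empty_iff_forall_notMem.mpr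
    rintro v ⟨⟨i, rfl⟩, hv⟩
    rw [SimpleGraph.mem_neighborSet] at hv
    by_cases hi : i ∈ insert a s
    · rw [(by simp [cfgQ, hi] : cfgQ b (insert a s) q i = b)] at hv
      exact G.loopless.irrefl b hv
    · have his : i ∉ s := fun h => hi (Finset.mem_insert_of_mem h)
      rw [(by simp [cfgQ, hi] : cfgQ b (insert a s) q i = q i)] at hv
      exact hsp i his hv

/-- Reverse-move all agents outside `s` from `q'` back to `q`, while agent `a`
(currently at `b`) exits onto the sphere at `q a`. -/
lemma gstep_exit (hmv : ∀ i, q' i = q i ∨ G.Adj (q i) (q' i)) (s : Finset (Fin n))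
    (a : Fin n) (ha : a ∈ s) (hadj : G.Adj b (q a))
    (hq : ∀ i, i ∉ s → q i ≠ b) (hq' : ∀ i, i ∉ s → q' i ≠ b)
    (hsp' : ∀ i, i ∉ s → ¬ G.Adj b (q' i)) :
    GStep G b (cfgQ b s q') (cfgQ b (s.erase a) q) := by
  refine ⟨?_, ?_, ?_⟩
  · intro i
    by_cases hia : i = a
    · subst hia
      right
      rw [(by simp [cfgQ, ha] : cfgQ b s q' i = b),
        (by simp [cfgQ] : cfgQ b (s.erase i) q i = q i)]
      exact hadj
    · by_cases hi : i ∈ s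
      · left
        simp [cfgQ, hi, Finset.mem_erase, hia]
      · have hiE : i ∉ s.erase a := fun h => hi (Finset.mem_of_mem_erase h)
        rcases hmv i with h | h
        · left; simp [cfgQ, hi, hiE, h]
        · right; simpa [cfgQ, hi, hiE] using h.symm
  · have e1 : {i : Fin n | cfgQ b s q' i = b ∧ cfgQ b (s.erase a) q i ≠ b} = {a} := by
      ext i
      simp only [Set.mem_setOf_eq, Set.mem_singleton_iff]
      constructor
      · rintro ⟨h1, h2⟩
        by_cases hia : i = a
        · exact hia
        · by_cases hi : i ∈ s
          · exact absurd (by simp [cfgQ, Finset.mem_erase, hia, hi] :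
              cfgQ b (s.erase a) q i = b) h2
          · exact absurd (by simpa [cfgQ, hi] using h1) (hq' i hi)
      · rintro rfl
        refine ⟨by simp [cfgQ, ha], ?_⟩
        rw [(by simp [cfgQ] : cfgQ b (s.erase i) q i = q i)]
        exact hadj.ne'
    have e2 : {i : Fin n | cfgQ b (s.erase a) q i = b ∧ cfgQ b s q' i ≠ b} = ∅ := by
      apply Set.eq_empty_iff_forall_notMem.mpr
      rintro i ⟨h1, h2⟩
      by_cases hiE : i ∈ s.erase a
      · exact h2 (by simp [cfgQ, Finset.mem_of_mem_erase hiE])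
      · by_cases hia : i = a
        · subst hia
          exact hadj.ne' (by simpa [cfgQ, hiE] using h1)
        · have hi : i ∉ s := fun h => hiE (Finset.mem_erase.mpr ⟨hia, h⟩)
          exact hq i hi (by simpa [cfgQ, hiE] using h1)
    rw [e1, e2]
    simp
  · left
    apply Set.eq_empty_iff_forall_notMem.mpr
    rintro v ⟨⟨i, rfl⟩, hv⟩
    rw [SimpleGraph.mem_neighborSet] at hv
    by_cases hi : i ∈ s
    · rw [(by simp [cfgQ, hi] : cfgQ b s q' i = b)] at hv
      exact G.loopless.irrefl b hv
    · rw [(by simp [cfgQ, hi] : cfgQ b s q' i = q' i)] at hv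
      exact hsp' i hi hv

end BHSteps

section BHBlock

variable {V : Type*} {n : ℕ}

open scoped Classical in
/-- Agents whose position under `q` lies in the closed neighbourhood of `b`. -/
noncomputable def PhiF (G : SimpleGraph V) (b : V) (q : Fin n → V) : Finset (Fin n) :=
  Finset.univ.filter (fun i => q i = b ∨ G.Adj b (q i))

open scoped Classical in
/-- Agents entering the closed neighbourhood of `b` during the step `q → q'`. -/
noncomputable def InF (G : SimpleGraph V) (b : V) (q q' : Fin n → V) : Finset (Fin n) :=
  Finset.univ.filter
    (fun i => ¬(q i = b ∨ G.Adj b (q i)) ∧ (q' i = b ∨ G.Adj b (q' i)))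

open scoped Classical in
/-- Agents leaving the closed neighbourhood of `b` during the step `q → q'`. -/
noncomputable def OutF (G : SimpleGraph V) (b : V) (q q' : Fin n → V) : Finset (Fin n) :=
  Finset.univ.filter
    (fun i => (q i = b ∨ G.Adj b (q i)) ∧ ¬(q' i = b ∨ G.Adj b (q' i)))

variable {G : SimpleGraph V} {P : Set V} {b : V} {q q' : Fin n → V}

lemma mem_PhiF {i : Fin n} : i ∈ PhiF G b q ↔ (q i = b ∨ G.Adj b (q i)) := by
  simp [PhiF]

lemma mem_InF {i : Fin n} :
    i ∈ InF G b q q' ↔ ¬(q i = b ∨ G.Adj b (q i)) ∧ (q' i = b ∨ G.Adj b (q' i)) := by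
  simp only [InF, Finset.mem_filter, Finset.mem_univ, true_and]

lemma mem_OutF {i : Fin n} :
    i ∈ OutF G b q q' ↔ (q i = b ∨ G.Adj b (q i)) ∧ ¬(q' i = b ∨ G.Adj b (q' i)) := by
  simp only [OutF, Finset.mem_filter, Finset.mem_univ, true_and]

/-- The main block lemma: one original step, folded onto `b`, can be realised by
good steps. -/
lemma reach_block (hb : b ∉ P)
    (hmv : ∀ i, q' i = q i ∨ G.Adj (q i) (q' i))
    (hiq : GalIndep G P 1 q) (hiq' : GalIndep G P 1 q') :
    GReach G P b (cfgQ b (PhiF G b q) q) (cfgQ b (PhiF G b q') q') := by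
  classical
  have fA : ∀ i, ¬(q i = b ∨ G.Adj b (q i)) → q' i ≠ b := by
    intro i hR hb'
    rcases hmv i with h | h
    · exact hR (Or.inl (h.symm.trans hb'))
    · rw [hb'] at h
      exact hR (Or.inr h.symm)
  have fB : ∀ i, q i = b → (q' i = b ∨ G.Adj b (q' i)) := by
    intro i h
    rcases hmv i with h' | h'
    · exact Or.inl (h'.trans h)
    · rw [h] at h'
      exact Or.inr h'
  -- Phase A : agents entering N[b] dive into b one at a time.
  have phA : ∀ J : Finset (Fin n), J ⊆ InF G b q q' →
      GReach G P b (cfgQ b (PhiF G b q ∪ (InF G b q q' \ J)) q)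
        (cfgQ b (PhiF G b q ∪ InF G b q q') q) := by
    intro J
    induction J using Finset.induction_on with
    | empty =>
      intro _
      rw [Finset.sdiff_empty]
      exact GReach.refl (indep_cfg hb hiq _)
    | @insert a J haJ ih =>
      intro hsub
      have haIn : a ∈ InF G b q q' := hsub (Finset.mem_insert_self a J)
      obtain ⟨haR, haR'⟩ := mem_InF.mp haIn
      have hnotS : ∀ i, i ∉ PhiF G b q ∪ (InF G b q q' \ insert a J) →
          ¬(q i = b ∨ G.Adj b (q i)) :=
        fun i hi h => hi (Finset.mem_union_left _ (mem_PhiF.mpr h))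
      have hq1 : ∀ i, i ∉ PhiF G b q ∪ (InF G b q q' \ insert a J) → q i ≠ b :=
        fun i hi h => hnotS i hi (Or.inl h)
      have hq1' : ∀ i, i ∉ PhiF G b q ∪ (InF G b q q' \ insert a J) → q' i ≠ b :=
        fun i hi => fA i (hnotS i hi)
      have hsp1 : ∀ i, i ∉ PhiF G b q ∪ (InF G b q q' \ insert a J) → ¬ G.Adj b (q i) :=
        fun i hi h => hnotS i hi (Or.inr h)
      have haNotS : a ∉ PhiF G b q ∪ (InF G b q q' \ insert a J) := by
        intro h
        rcases Finset.mem_union.mp h with h | h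
        · exact haR (mem_PhiF.mp h)
        · exact (Finset.mem_sdiff.mp h).2 (Finset.mem_insert_self a J)
      have hadj : G.Adj b (q' a) := by
        rcases haR' with h | h
        · exact absurd h (fA a haR)
        · exact h
      have step1 := gstep_fwd hmv (PhiF G b q ∪ (InF G b q q' \ insert a J))
        hq1 hq1' (Or.inl hsp1)
      have step2 := gstep_enter hmv (PhiF G b q ∪ (InF G b q q' \ insert a J))
        a haNotS hadj hq1 hq1' hsp1
      have key : insert a (PhiF G b q ∪ (InF G b q q' \ insert a J))
          = PhiF G b q ∪ (InF G b q q' \ J) := by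
        ext i
        by_cases hia : i = a
        · subst hia
          simp [Finset.mem_insert, Finset.mem_union, Finset.mem_sdiff, haIn, haJ]
        · simp [Finset.mem_insert, Finset.mem_union, Finset.mem_sdiff, hia]
      have ihJ := ih (fun x hx => hsub (Finset.mem_insert_of_mem hx))
      rw [← key] at ihJ
      exact ((GReach.single step1 (indep_cfg hb hiq _) (indep_cfg hb hiq' _)).trans
        (GReach.single step2 (indep_cfg hb hiq' _) (indep_cfg hb hiq _))).trans ihJ
  -- Phase C : agents leaving N[b] surface from b one at a time.
  have phC : ∀ J : Finset (Fin n), J ⊆ OutF G b q q' →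
      GReach G P b (cfgQ b (PhiF G b q' ∪ J) q') (cfgQ b (PhiF G b q') q') := by
    intro J
    induction J using Finset.induction_on with
    | empty =>
      intro _
      rw [Finset.union_empty]
      exact GReach.refl (indep_cfg hb hiq' _)
    | @insert a J haJ ih =>
      intro hsub
      have haOut : a ∈ OutF G b q q' := hsub (Finset.mem_insert_self a J)
      obtain ⟨haR, haR'⟩ := mem_OutF.mp haOut
      have hnR' : ∀ i, i ∉ PhiF G b q' ∪ insert a J → ¬(q' i = b ∨ G.Adj b (q' i)) :=
        fun i hi h => hi (Finset.mem_union_left _ (mem_PhiF.mpr h))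
      have hq1' : ∀ i, i ∉ PhiF G b q' ∪ insert a J → q' i ≠ b :=
        fun i hi h => hnR' i hi (Or.inl h)
      have hsp1' : ∀ i, i ∉ PhiF G b q' ∪ insert a J → ¬ G.Adj b (q' i) :=
        fun i hi h => hnR' i hi (Or.inr h)
      have hq1 : ∀ i, i ∉ PhiF G b q' ∪ insert a J → q i ≠ b :=
        fun i hi h => hnR' i hi (fB i h)
      have haMem : a ∈ PhiF G b q' ∪ insert a J :=
        Finset.mem_union_right _ (Finset.mem_insert_self a J)
      have hadjqa : G.Adj b (q a) := by
        rcases haR with h | h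
        · exact absurd (fB a h) haR'
        · exact h
      have step1 := gstep_exit hmv (PhiF G b q' ∪ insert a J) a haMem hadjqa
        hq1 hq1' hsp1'
      have hqE : ∀ i, i ∉ (PhiF G b q' ∪ insert a J).erase a → q i ≠ b := by
        intro i hi
        by_cases hia : i = a
        · subst hia; exact hadjqa.ne'
        · exact hq1 i (fun h => hi (Finset.mem_erase.mpr ⟨hia, h⟩))
      have hq'E : ∀ i, i ∉ (PhiF G b q' ∪ insert a J).erase a → q' i ≠ b := by
        intro i hi
        by_cases hia : i = a
        · subst hia; exact fun h => haR' (Or.inl h)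
        · exact hq1' i (fun h => hi (Finset.mem_erase.mpr ⟨hia, h⟩))
      have hspE : ∀ i, i ∉ (PhiF G b q' ∪ insert a J).erase a → ¬ G.Adj b (q' i) := by
        intro i hi
        by_cases hia : i = a
        · subst hia; exact fun h => haR' (Or.inr h)
        · exact hsp1' i (fun h => hi (Finset.mem_erase.mpr ⟨hia, h⟩))
      have step2 := gstep_fwd hmv ((PhiF G b q' ∪ insert a J).erase a)
        hqE hq'E (Or.inr hspE)
      have key : (PhiF G b q' ∪ insert a J).erase a = PhiF G b q' ∪ J := by
        ext i
        by_cases hia : i = a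
        · subst hia
          simp [Finset.mem_erase, Finset.mem_union, Finset.mem_insert, mem_PhiF,
            haJ, haR']
        · simp [Finset.mem_erase, Finset.mem_union, Finset.mem_insert, hia]
      have ihJ := ih (fun x hx => hsub (Finset.mem_insert_of_mem hx))
      rw [← key] at ihJ
      exact ((GReach.single step1 (indep_cfg hb hiq' _) (indep_cfg hb hiq _)).trans
        ((GReach.single step2 (indep_cfg hb hiq _) (indep_cfg hb hiq' _)).trans ihJ))
  -- the main synchronised move
  have hq2 : ∀ i, i ∉ PhiF G b q ∪ InF G b q q' → q i ≠ b :=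
    fun i hi h => hi (Finset.mem_union_left _ (mem_PhiF.mpr (Or.inl h)))
  have hnR2 : ∀ i, i ∉ PhiF G b q ∪ InF G b q q' → ¬(q i = b ∨ G.Adj b (q i)) :=
    fun i hi h => hi (Finset.mem_union_left _ (mem_PhiF.mpr h))
  have hq2' : ∀ i, i ∉ PhiF G b q ∪ InF G b q q' → q' i ≠ b := by
    intro i hi h
    exact hi (Finset.mem_union_right _ (mem_InF.mpr ⟨hnR2 i hi, Or.inl h⟩))
  have hsp2 : ∀ i, i ∉ PhiF G b q ∪ InF G b q q' → ¬ G.Adj b (q i) :=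
    fun i hi h => hnR2 i hi (Or.inr h)
  have stepM := gstep_fwd hmv (PhiF G b q ∪ InF G b q q') hq2 hq2' (Or.inl hsp2)
  have seteq : PhiF G b q ∪ InF G b q q' = PhiF G b q' ∪ OutF G b q q' := by
    ext i
    simp only [Finset.mem_union, mem_PhiF, mem_InF, mem_OutF]
    tauto
  have h1 := phA (InF G b q q') (le_refl _)
  rw [Finset.sdiff_self, Finset.union_empty] at h1
  have h3 := phC (OutF G b q q') (le_refl _)
  rw [← seteq] at h3
  exact (h1.trans (GReach.single stepM (indep_cfg hb hiq _) (indep_cfg hb hiq' _))).trans h3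

end BHBlock

/-- any feasible instance of Galactic 1IUMAPF with a black hole `b` admits a
plan in which (1) no two consecutive configurations both place an agent in `N(b)`, and
(2) at every step at most one agent in total leaves or enters `b`. -/
theorem exists_plan_nbhd_alternating_single_transfer {V : Type*} [Fintype V]
    (G : SimpleGraph V) (P : Set V) (b : V) (hb : b ∉ P)
    (n : ℕ) (S T : Set V) (hSP : S ⊆ P) (hTP : T ⊆ P)
    (hS : S.ncard = n) (hT : T.ncard = n)
    (hbh : nclSet G (S ∪ T) ⊆ P)
    (hplan : GalPlan G P 1 n S T) :
    ∃ (ℓ : ℕ) (Q : ℕ → Fin n → V),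
      (Set.range (Q 0) = S ∧ Set.range (Q ℓ) = T ∧
        (∀ k ≤ ℓ, GalIndep G P 1 (Q k)) ∧
        (∀ k < ℓ, ∀ i : Fin n, Q (k + 1) i = Q k i ∨ G.Adj (Q k i) (Q (k + 1) i))) ∧
      (∀ t < ℓ, Set.range (Q t) ∩ G.neighborSet b = ∅ ∨
        Set.range (Q (t + 1)) ∩ G.neighborSet b = ∅) ∧
      (∀ t, 1 ≤ t → t ≤ ℓ →
        {i : Fin n | Q (t - 1) i = b ∧ Q t i ≠ b}.ncard +
          {i : Fin n | Q t i = b ∧ Q (t - 1) i ≠ b}.ncard ≤ 1) := by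
  classical
  obtain ⟨ℓ, Q, hQ0, hQl, hQind, hQmv⟩ := hplan
  -- the folded plan reaches the fold of every era
  have hall : ∀ e, e ≤ ℓ →
      GReach G P b (cfgQ b (PhiF G b (Q 0)) (Q 0)) (cfgQ b (PhiF G b (Q e)) (Q e)) := by
    intro e
    induction e with
    | zero =>
      intro _
      exact GReach.refl (indep_cfg hb (hQind 0 (Nat.zero_le _)) _)
    | succ e ih =>
      intro he
      exact (ih (by omega)).trans
        (reach_block hb (hQmv e (by omega)) (hQind e (by omega)) (hQind (e + 1) he))
  have hreach := hall ℓ le_rfl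
  -- the endpoints are not folded at all
  have hstart : cfgQ b (PhiF G b (Q 0)) (Q 0) = Q 0 := by
    funext i
    have hiS : Q 0 i ∈ S := hQ0 ▸ Set.mem_range_self i
    have hns : i ∉ PhiF G b (Q 0) := by
      rw [mem_PhiF]
      rintro (h | h)
      · exact hb (hbh (Or.inl (Or.inl (h ▸ hiS))))
      · exact hb (hbh (Or.inr ⟨Q 0 i, Or.inl hiS, h.symm⟩))
    simp [cfgQ, hns]
  have hend : cfgQ b (PhiF G b (Q ℓ)) (Q ℓ) = Q ℓ := by
    funext i
    have hiT : Q ℓ i ∈ T := hQl ▸ Set.mem_range_self i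
    have hns : i ∉ PhiF G b (Q ℓ) := by
      rw [mem_PhiF]
      rintro (h | h)
      · exact hb (hbh (Or.inl (Or.inr (h ▸ hiT))))
      · exact hb (hbh (Or.inr ⟨Q ℓ i, Or.inr hiT, h.symm⟩))
    simp [cfgQ, hns]
  rw [hstart, hend] at hreach
  obtain ⟨m, f, hf0, hfm, hfs, hfi⟩ := hreach
  refine ⟨m, f, ⟨?_, ?_, ?_, ?_⟩, ?_, ?_⟩
  · rw [hf0]; exact hQ0
  · rw [hfm]; exact hQl
  · exact fun k hk => hfi k hk
  · exact fun k hk i => (hfs k hk).1 i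
  · exact fun t ht => (hfs t ht).2.2
  · intro t ht1 htm
    have h := (hfs (t - 1) (by omega)).2.1
    rw [Nat.sub_add_cancel ht1] at h
    exact h
end

section
/- Let G = (V,E) be a finite simple connected graph such that there is no edge uv ∈ E for which the induced subgraph G[V ∖ {u,v}] is disconnected, and let n < |V|. Then for every pair of vertex sets S, T ⊆ V with |S| = |T| = n, there exists a plan for 0IUMAPF (unlabeled multi-agent pathfinding) from S to T. -/
open SimpleGraph

namespace ZeroMAPF

open Finset

variable {V : Type*}

/-- One sliding move: a token at `u` moves to an adjacent empty vertex `w`. -/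
def Step [DecidableEq V] (G : SimpleGraph V) (S S' : Finset V) : Prop :=
  ∃ u w, u ∈ S ∧ w ∉ S ∧ G.Adj u w ∧ S' = insert w (S.erase u)

/-- Reachability by sliding moves. -/
def Reach [DecidableEq V] (G : SimpleGraph V) : Finset V → Finset V → Prop :=
  Relation.ReflTransGen (Step G)

section Basic
variable [DecidableEq V]

lemma Step.card_eq {G : SimpleGraph V} {S S' : Finset V} (h : Step G S S') :
    S'.card = S.card := by
  obtain ⟨u, w, hu, hw, _, rfl⟩ := h
  rw [card_insert_of_notMem (fun hmem => hw (mem_of_mem_erase hmem)),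
    card_erase_of_mem hu]
  have : 0 < S.card := card_pos.mpr ⟨u, hu⟩
  omega

lemma Reach.card_eq {G : SimpleGraph V} {S S' : Finset V} (h : Reach G S S') :
    S'.card = S.card := by
  induction h with
  | refl => rfl
  | tail _ hstep ih => rw [hstep.card_eq, ih]

lemma Step.symm {G : SimpleGraph V} {S S' : Finset V} (h : Step G S S') :
    Step G S' S := by
  obtain ⟨u, w, hu, hw, hadj, rfl⟩ := h
  refine ⟨w, u, mem_insert_self _ _, ?_, hadj.symm, ?_⟩
  · simp only [mem_insert, mem_erase]
    push_neg
    exact ⟨hadj.ne, fun h _ => (h rfl).elim⟩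
  · rw [erase_insert (fun hmem => hw (mem_of_mem_erase hmem)), insert_erase hu]

lemma Reach.symm {G : SimpleGraph V} {S S' : Finset V} (h : Reach G S S') :
    Reach G S' S := by
  induction h with
  | refl => exact Relation.ReflTransGen.refl
  | tail _ hstep ih => exact Relation.ReflTransGen.head hstep.symm ih



/-- Evict a token off vertex `a`, using a path from `a` to an empty vertex `e`.
Vertices off the path keep their occupancy status. -/
lemma evict {G : SimpleGraph V} :
    ∀ {a e : V} (w : G.Walk a e), w.IsPath → ∀ S : Finset V, a ∈ S → e ∉ S →
    ∃ S', Reach G S S' ∧ a ∉ S' ∧ ∀ y, y ∉ w.support → (y ∈ S' ↔ y ∈ S) := by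
  intro a e w
  induction w with
  | nil => intro _ S ha he; exact absurd ha he
  | @cons a x e hadj w' ih =>
    intro hp S ha he
    rw [SimpleGraph.Walk.cons_isPath_iff] at hp
    by_cases hx : x ∈ S
    · obtain ⟨S₁, hreach, hxS₁, houtside⟩ := ih hp.1 S hx he
      have haS₁ : a ∈ S₁ := (houtside a hp.2).mpr ha
      refine ⟨insert x (S₁.erase a), Relation.ReflTransGen.tail hreach
        ⟨a, x, haS₁, hxS₁, hadj, rfl⟩, ?_, ?_⟩
      · simp [hadj.ne, hadj.ne']
      · intro y hy
        rw [Walk.support_cons, List.mem_cons] at hy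
        push_neg at hy
        have hyx : y ≠ x := fun h => hy.2 (h ▸ w'.start_mem_support)
        simp only [mem_insert, mem_erase, hyx, false_or, hy.1, ne_eq,
          not_false_eq_true, true_and]
        exact houtside y hy.2
    · refine ⟨insert x (S.erase a), Relation.ReflTransGen.single
        ⟨a, x, ha, hx, hadj, rfl⟩, ?_, ?_⟩
      · simp [hadj.ne, hadj.ne']
      · intro y hy
        rw [Walk.support_cons, List.mem_cons] at hy
        push_neg at hy
        have hyx : y ≠ x := fun h => hy.2 (h ▸ w'.start_mem_support)
        simp [hyx, hy.1]

/-- Fill vertex `a` with a token, using a path from `a` to an occupied vertex `e`. -/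
lemma fill {G : SimpleGraph V} :
    ∀ {a e : V} (w : G.Walk a e), w.IsPath → ∀ S : Finset V, a ∉ S → e ∈ S →
    ∃ S', Reach G S S' ∧ a ∈ S' ∧ ∀ y, y ∉ w.support → (y ∈ S' ↔ y ∈ S) := by
  intro a e w
  induction w with
  | nil => intro _ S ha he; exact absurd he ha
  | @cons a x e hadj w' ih =>
    intro hp S ha he
    rw [SimpleGraph.Walk.cons_isPath_iff] at hp
    by_cases hx : x ∈ S
    · refine ⟨insert a (S.erase x), Relation.ReflTransGen.single
        ⟨x, a, hx, ha, hadj.symm, rfl⟩, mem_insert_self _ _, ?_⟩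
      intro y hy
      rw [Walk.support_cons, List.mem_cons] at hy
      push_neg at hy
      have hyx : y ≠ x := fun h => hy.2 (h ▸ w'.start_mem_support)
      simp [hyx, hy.1]
    · obtain ⟨S₁, hreach, hxS₁, houtside⟩ := ih hp.1 S hx he
      have haS₁ : a ∉ S₁ := fun h => ha ((houtside a hp.2).mp h)
      refine ⟨insert a (S₁.erase x), Relation.ReflTransGen.tail hreach
        ⟨x, a, hxS₁, haS₁, hadj.symm, rfl⟩, mem_insert_self _ _, ?_⟩
      intro y hy
      rw [Walk.support_cons, List.mem_cons] at hy
      push_neg at hy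
      have hyx : y ≠ x := fun h => hy.2 (h ▸ w'.start_mem_support)
      simp only [mem_insert, mem_erase, hy.1, false_or, hyx, ne_eq,
        not_false_eq_true, true_and]
      exact houtside y hy.2

end Basic

lemma reachable_induce {s : Set V} {G : SimpleGraph V} :
    ∀ {a b : V} (w : G.Walk a b), (∀ x ∈ w.support, x ∈ s) →
    ∀ (ha : a ∈ s) (hb : b ∈ s), (G.induce s).Reachable ⟨a, ha⟩ ⟨b, hb⟩ := by
  intro a b w
  induction w with
  | nil => intro _ ha hb; exact Reachable.refl _
  | @cons a x b hadj w' ih =>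
    intro hsup ha hb
    have hx : x ∈ s := hsup x (by simp)
    have h1 : (G.induce s).Adj ⟨a, ha⟩ ⟨x, hx⟩ := hadj
    exact h1.reachable.trans (ih (fun y hy => hsup y (by simp [hy])) hx hb)

/-- A vertex at maximal distance from a fixed vertex is not a cut vertex. -/
lemma exists_noncut [Fintype V] (G : SimpleGraph V) (hconn : G.Connected)
    (h2 : 2 ≤ Fintype.card V) :
    ∃ v : V, (G.induce {x : V | x ≠ v}).Connected := by
  have : Nonempty V := Fintype.card_pos_iff.mp (by omega)
  obtain ⟨r⟩ := this
  obtain ⟨v, -, hv⟩ := Finset.exists_max_image Finset.univ (G.dist r)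
    ⟨r, Finset.mem_univ r⟩
  have hrv : r ≠ v := by
    rintro rfl
    have hall : ∀ u : V, u = r := by
      intro u
      have h1 := hv u (Finset.mem_univ u)
      rw [SimpleGraph.dist_self] at h1
      exact ((hconn.dist_eq_zero_iff (u := r) (v := u)).mp (Nat.le_zero.mp h1)).symm
    have : Fintype.card V ≤ 1 :=
      Fintype.card_le_one_iff.mpr (fun a b => (hall a).trans (hall b).symm)
    omega
  refine ⟨v, ?_⟩
  classical
  have key : ∀ (a : V) (ha : a ≠ v),
      (G.induce {x : V | x ≠ v}).Reachable ⟨a, ha⟩ ⟨r, hrv⟩ := by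
    intro a ha
    obtain ⟨w, hw⟩ := (hconn a r).exists_walk_length_eq_dist
    have hvsup : v ∉ w.support := by
      intro hmem
      have hsplit : (w.takeUntil v hmem).length + (w.dropUntil v hmem).length
          = w.length := by
        rw [← SimpleGraph.Walk.length_append, SimpleGraph.Walk.take_spec]
      have h1 : 0 < (w.takeUntil v hmem).length := by
        rcases Nat.eq_zero_or_pos (w.takeUntil v hmem).length with h | h
        · exact absurd (SimpleGraph.Walk.eq_of_length_eq_zero h) ha
        · exact h
      have h2 : G.dist v r ≤ (w.dropUntil v hmem).length :=
        SimpleGraph.dist_le _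
      have h3 : G.dist r a ≤ G.dist r v := hv a (Finset.mem_univ a)
      rw [SimpleGraph.dist_comm] at h3
      have h4 : G.dist r v = G.dist v r := SimpleGraph.dist_comm
      omega
    exact reachable_induce w (fun x hx => show x ≠ v from fun hxv => hvsup (hxv ▸ hx)) ha hrv
  rw [connected_iff]
  refine ⟨fun x y => (key x.1 x.2).trans (key y.1 y.2).symm, ⟨⟨r, hrv⟩⟩⟩

section Lift
variable [DecidableEq V] {s : Set V}

/-- View a finset of the subtype inside `V`. -/
def liftF (A : Finset ↥s) : Finset V := A.image Subtype.val

lemma step_lift {G : SimpleGraph V} {A B : Finset ↥s}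
    (h : Step (G.induce s) A B) (C : Finset V) (hC : ∀ c ∈ C, c ∉ s) :
    Step G (liftF A ∪ C) (liftF B ∪ C) := by
  obtain ⟨u, w, hu, hw, hadj, rfl⟩ := h
  have hwl : w.1 ∉ liftF A ∪ C := by
    intro hmem
    rcases Finset.mem_union.mp hmem with h1 | h1
    · obtain ⟨z, hz, hze⟩ := Finset.mem_image.mp h1
      exact hw (Subtype.coe_injective hze ▸ hz)
    · exact hC _ h1 w.2
  refine ⟨u.1, w.1, Finset.mem_union_left _ (Finset.mem_image_of_mem _ hu),
    hwl, hadj, ?_⟩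
  have huC : u.1 ∉ C := fun h => hC _ h u.2
  rw [liftF, Finset.image_insert, Finset.image_erase Subtype.coe_injective,
    Finset.insert_union, Finset.erase_union_distrib,
    Finset.erase_eq_of_notMem huC]
  rfl

lemma reach_lift {G : SimpleGraph V} {A B : Finset ↥s}
    (h : Reach (G.induce s) A B) (C : Finset V) (hC : ∀ c ∈ C, c ∉ s) :
    Reach G (liftF A ∪ C) (liftF B ∪ C) := by
  induction h with
  | refl => exact Relation.ReflTransGen.refl
  | tail _ hstep ih => exact Relation.ReflTransGen.tail ih (step_lift hstep C hC)

lemma liftF_subtype [DecidablePred (· ∈ s)] (S : Finset V)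
    (hS : ∀ x ∈ S, x ∈ s) : liftF (S.subtype (· ∈ s)) = S := by
  ext x
  constructor
  · intro h
    obtain ⟨a, ha, rfl⟩ := Finset.mem_image.mp h
    exact Finset.mem_subtype.mp ha
  · intro hx
    exact Finset.mem_image.mpr ⟨⟨x, hS x hx⟩, Finset.mem_subtype.mpr hx, rfl⟩

lemma card_liftF (A : Finset ↥s) : (liftF A).card = A.card :=
  Finset.card_image_of_injective _ Subtype.coe_injective

end Lift

lemma plan_of_reach [DecidableEq V] {G : SimpleGraph V} {S T : Finset V} {n : ℕ}
    (hS : S.card = n) (h : Reach G S T) :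
    ∃ (ℓ : ℕ) (Q : ℕ → Fin n → V),
      Set.range (Q 0) = ↑S ∧ Set.range (Q ℓ) = ↑T ∧
      (∀ k ≤ ℓ, Function.Injective (Q k)) ∧
      (∀ k < ℓ, ∀ i : Fin n, Q (k + 1) i = Q k i ∨ G.Adj (Q k i) (Q (k + 1) i)) := by
  induction h with
  | refl =>
    have hcard : Fintype.card ↥S = n := by rw [Fintype.card_coe, hS]
    let e := (Fintype.equivFinOfCardEq hcard).symm
    have hrange : Set.range (fun i => ((e i : V))) = ↑S := by
      ext x
      constructor
      · rintro ⟨i, rfl⟩; exact (e i).2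
      · intro hx; exact ⟨e.symm ⟨x, hx⟩, by simp⟩
    refine ⟨0, fun _ i => (e i : V), hrange, hrange, ?_, ?_⟩
    · intro k _
      exact Subtype.coe_injective.comp e.injective
    · intro k hk; omega
  | @tail M T' hR hstep ih =>
    obtain ⟨ℓ, Q, h0, hM, hinj, hmov⟩ := ih
    obtain ⟨u, w, hu, hw, hadj, rfl⟩ := hstep
    have : u ∈ Set.range (Q ℓ) := hM ▸ (by exact_mod_cast hu)
    obtain ⟨i₀, hi₀⟩ := this
    set f : Fin n → V := Function.update (Q ℓ) i₀ w with hf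
    refine ⟨ℓ + 1, fun k => if k ≤ ℓ then Q k else f, ?_, ?_, ?_, ?_⟩
    · simpa using h0
    · have hk : ¬ (ℓ + 1 ≤ ℓ) := by omega
      simp only [hk, if_false]
      ext x
      simp only [Set.mem_range, coe_insert, Set.mem_insert_iff, coe_erase,
        Set.mem_diff, Set.mem_singleton_iff]
      constructor
      · rintro ⟨i, rfl⟩
        by_cases hii : i = i₀
        · subst hii; left; simp [hf]
        · right
          rw [hf, Function.update_of_ne hii]
          constructor
          · rw [← hM]; exact ⟨i, rfl⟩
          · intro heq
            exact hii (hinj ℓ le_rfl (heq.trans hi₀.symm))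
      · rintro (rfl | ⟨hxM, hxu⟩)
        · exact ⟨i₀, by simp [hf]⟩
        · rw [← hM] at hxM
          obtain ⟨i, rfl⟩ := hxM
          have hii : i ≠ i₀ := fun h => hxu (h ▸ hi₀ ▸ rfl)
          exact ⟨i, by rw [hf, Function.update_of_ne hii]⟩
    · intro k hk
      by_cases hkl : k ≤ ℓ
      · simp only [hkl, if_true]; exact hinj k hkl
      · simp only [hkl, if_false]
        intro a b hab
        rw [hf] at hab
        have hmem : ∀ c : Fin n, Q ℓ c ∈ (↑M : Set V) :=
          fun c => hM ▸ Set.mem_range_self c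
        by_cases ha : a = i₀ <;> by_cases hb : b = i₀
        · rw [ha, hb]
        · exfalso
          rw [ha, Function.update_self, Function.update_of_ne hb] at hab
          exact hw (by rw [hab]; exact_mod_cast hmem b)
        · exfalso
          rw [hb, Function.update_self, Function.update_of_ne ha] at hab
          exact hw (by rw [← hab]; exact_mod_cast hmem a)
        · rw [Function.update_of_ne ha, Function.update_of_ne hb] at hab
          exact hinj ℓ le_rfl hab
    · intro k hk i
      by_cases hkl : k < ℓ
      · have h1 : k ≤ ℓ := le_of_lt hkl
        have h2 : k + 1 ≤ ℓ := hkl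
        simp only [h1, h2, if_true]
        exact hmov k hkl i
      · have hkeq : k = ℓ := by omega
        subst hkeq
        have h2 : ¬ (k + 1 ≤ k) := by omega
        simp only [le_refl, if_true, h2, if_false]
        by_cases hii : i = i₀
        · subst hii
          right
          rw [hf, Function.update_self, hi₀]
          exact hadj
        · left
          rw [hf, Function.update_of_ne hii]
universe u

lemma reach_main : ∀ (N : ℕ) {V : Type u} [Fintype V] [DecidableEq V]
    (G : SimpleGraph V), G.Connected → Fintype.card V = N →
    ∀ S T : Finset V, S.card = T.card → S.card < N → Reach G S T := by
  intro N
  induction N using Nat.strong_induction_on with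
  | _ N IH =>
    intro V _ _ G hconn hcard S T hST hlt
    rcases Nat.eq_zero_or_pos S.card with h0 | hpos
    · have hS0 : S = ∅ := card_eq_zero.mp h0
      have hT0 : T = ∅ := card_eq_zero.mp (by omega)
      rw [hS0, hT0]
      exact Relation.ReflTransGen.refl
    have h2 : 2 ≤ N := by omega
    obtain ⟨v, hGv⟩ := exists_noncut G hconn (hcard ▸ h2)
    set s : Set V := {x : V | x ≠ v} with hs
    haveI hdec : DecidablePred (· ∈ s) := fun x => decidable_of_iff (x ≠ v) Iff.rfl
    have hvns : v ∉ s := fun h => h rfl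
    have hcards : Fintype.card ↥s = N - 1 := by
      rw [← hcard]
      exact Set.card_ne_eq v
    have main₂ : ∀ S T : Finset V, S.card = T.card → S.card < N →
        (v ∈ S ↔ v ∈ T) → Reach G S T := by
      intro S T hST hlt hvmem
      by_cases hv : v ∈ S
      · have hvT : v ∈ T := hvmem.mp hv
        have hSall : ∀ x ∈ S.erase v, x ∈ s := fun x hx => (mem_erase.mp hx).1
        have hTall : ∀ x ∈ T.erase v, x ∈ s := fun x hx => (mem_erase.mp hx).1
        set A : Finset ↥s := (S.erase v).subtype (· ∈ s) with hA
        set B : Finset ↥s := (T.erase v).subtype (· ∈ s) with hB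
        have hlA : liftF A = S.erase v := liftF_subtype _ hSall
        have hlB : liftF B = T.erase v := liftF_subtype _ hTall
        have hcA : A.card = S.card - 1 := by
          rw [← card_liftF A, hlA, card_erase_of_mem hv]
        have hcB : B.card = T.card - 1 := by
          rw [← card_liftF B, hlB, card_erase_of_mem hvT]
        have hR : Reach (G.induce s) A B := by
          refine IH (N - 1) (by omega) (G.induce s) hGv hcards A B ?_ ?_
          · rw [hcA, hcB, hST]
          · omega
        have hlift := reach_lift hR {v} (by
          intro c hc
          rw [mem_singleton] at hc
          subst hc
          exact hvns)
        rw [hlA, hlB] at hlift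
        have hSfix : S.erase v ∪ {v} = S := by
          ext x
          simp only [mem_union, mem_erase, mem_singleton]
          constructor
          · rintro (⟨_, h⟩ | rfl)
            · exact h
            · exact hv
          · intro h
            by_cases hx : x = v
            · right; exact hx
            · left; exact ⟨hx, h⟩
        have hTfix : T.erase v ∪ {v} = T := by
          ext x
          simp only [mem_union, mem_erase, mem_singleton]
          constructor
          · rintro (⟨_, h⟩ | rfl)
            · exact h
            · exact hvT
          · intro h
            by_cases hx : x = v
            · right; exact hx
            · left; exact ⟨hx, h⟩
        rwa [hSfix, hTfix] at hlift
      · have hvT : v ∉ T := fun h => hv (hvmem.mpr h)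
        have hSall : ∀ x ∈ S, x ∈ s := fun x hx => fun hxv => hv (hxv ▸ hx)
        have hTall : ∀ x ∈ T, x ∈ s := fun x hx => fun hxv => hvT (hxv ▸ hx)
        rcases Nat.lt_or_ge S.card (N - 1) with hsmall | hbig
        · set A : Finset ↥s := S.subtype (· ∈ s) with hA
          set B : Finset ↥s := T.subtype (· ∈ s) with hB
          have hlA : liftF A = S := liftF_subtype _ hSall
          have hlB : liftF B = T := liftF_subtype _ hTall
          have hcA : A.card = S.card := by rw [← card_liftF A, hlA]
          have hcB : B.card = T.card := by rw [← card_liftF B, hlB]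
          have hR : Reach (G.induce s) A B := by
            refine IH (N - 1) (by omega) (G.induce s) hGv hcards A B ?_ ?_
            · rw [hcA, hcB, hST]
            · omega
          have hlift := reach_lift hR ∅ (by intro c hc; exact absurd hc (notMem_empty c))
          rwa [union_empty, union_empty, hlA, hlB] at hlift
        · -- S.card = N - 1 and v ∉ S : then S = T = univ.erase v
          have hsub : ∀ U : Finset V, U.card = N - 1 → v ∉ U → U = univ.erase v := by
            intro U hU hvU
            apply Finset.eq_of_subset_of_card_le
            · intro x hx
              exact mem_erase.mpr ⟨fun h => hvU (h ▸ hx), mem_univ x⟩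
            · rw [card_erase_of_mem (mem_univ v), card_univ, hcard, hU]
          have hScard : S.card = N - 1 := by omega
          rw [hsub S hScard hv, hsub T (by omega) hvT]
          exact Relation.ReflTransGen.refl
    by_cases hvS : v ∈ S <;> by_cases hvT : v ∈ T
    · exact main₂ S T hST hlt (iff_of_true hvS hvT)
    · -- evict v from S
      have : ∃ e, e ∉ S := by
        by_contra hno
        push_neg at hno
        have : (univ : Finset V).card ≤ S.card := card_le_card (fun x _ => hno x)
        rw [card_univ, hcard] at this
        omega
      obtain ⟨e, he⟩ := this
      obtain ⟨p⟩ := hconn v e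
      obtain ⟨S₁, hreach, hvS₁, -⟩ := evict p.toPath.1 p.toPath.2 S hvS he
      exact hreach.trans (main₂ S₁ T (by rw [Reach.card_eq hreach, hST])
        (by rw [Reach.card_eq hreach]; exact hlt) (iff_of_false hvS₁ hvT))
    · -- fill v in S
      obtain ⟨e, he⟩ := card_pos.mp hpos
      obtain ⟨p⟩ := hconn v e
      obtain ⟨S₁, hreach, hvS₁, -⟩ := fill p.toPath.1 p.toPath.2 S hvS he
      exact hreach.trans (main₂ S₁ T (by rw [Reach.card_eq hreach, hST])
        (by rw [Reach.card_eq hreach]; exact hlt) (iff_of_true hvS₁ hvT))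
    · exact main₂ S T hST hlt (iff_of_false hvS hvT)

end ZeroMAPF

/-- on a finite simple connected graph with no edge `uv` such that
`G[V ∖ {u,v}]` is disconnected, every instance of 0IUMAPF with `n < |V|` agents is
feasible. -/
theorem zeroIUMAPF_complete {V : Type*} [Fintype V] (G : SimpleGraph V)
    (hconn : G.Connected)
    (hsep : ∀ u v : V, G.Adj u v → (G.induce (({u, v} : Set V)ᶜ)).Connected)
    (n : ℕ) (hn : n < Fintype.card V)
    (S T : Set V) (hS : S.ncard = n) (hT : T.ncard = n) :
    ∃ (ℓ : ℕ) (Q : ℕ → Fin n → V), IsPlan G 0 n ℓ Q S T := by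
  classical
  have hS' : S.toFinset.card = n := by rw [← Set.ncard_eq_toFinset_card' S, hS]
  have hT' : T.toFinset.card = n := by rw [← Set.ncard_eq_toFinset_card' T, hT]
  have hreach : ZeroMAPF.Reach G S.toFinset T.toFinset :=
    ZeroMAPF.reach_main (Fintype.card V) G hconn rfl _ _ (by rw [hS', hT'])
      (by rw [hS']; exact hn)
  obtain ⟨ℓ, Q, h0, hl, hinj, hmov⟩ := ZeroMAPF.plan_of_reach hS' hreach
  have h0' : Set.range (Q 0) = S := by rw [h0, Set.coe_toFinset]
  have hl' : Set.range (Q ℓ) = T := by rw [hl, Set.coe_toFinset]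
  have hdist : ∀ k ≤ ℓ, ∀ i j : Fin n, i ≠ j → 0 + 1 ≤ G.dist (Q k i) (Q k j) := by
    intro k hk i j hij
    have hne : Q k i ≠ Q k j := fun h => hij (hinj k hk h)
    have := hconn.pos_dist_of_ne hne
    omega
  exact ⟨ℓ, Q, h0', hl', hdist, hmov⟩
end

section
/- Let G = (V,E) be a finite simple connected graph, r ∈ ℕ, S, T ⊆ V with |S| = |T| = n, and τ ∈ ℕ. Then there exists a plan for rIUMAPF from S to T of length exactly τ if and only if there exist functions x : V × {0,…,τ} → {0,1} and f : V × V × {0,…,τ−1} → {0,1} satisfying: (i) x_{v,0} = 1 iff v ∈ S, and x_{v,τ} = 1 iff v ∈ T; (ii) f_{u,v,t} = 0 whenever v ∉ N[u]; (iii) for every t ∈ {0,…,τ−1} and u ∈ V, Σ_{v ∈ N[u]} f_{u,v,t} = x_{u,t}; (iv) for every t ∈ {1,…,τ} and u ∈ V, Σ_{v ∈ N[u]} f_{v,u,t−1} = x_{u,t}; (v) for every t ∈ {0,…,τ} and every pair of distinct vertices u, v with dist_G(u,v) ≤ r, x_{u,t} + x_{v,t} ≤ 1. -/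
open SimpleGraph

/-- correctness of the ILP formulation of Bounded rIUMAPF: a plan of length
exactly `τ` exists iff there are 0/1 vertex-occupancy variables `x` and flow variables `f`
satisfying the flow-conservation, boundary, and distance-`r` independence constraints. -/
theorem rIUMAPF_ilp_iff {V : Type*} [Fintype V] [DecidableEq V] (G : SimpleGraph V)
    [DecidableRel G.Adj] (hconn : G.Connected) (r n τ : ℕ)
    (S T : Set V) (hS : S.ncard = n) (hT : T.ncard = n) :
    (∃ Q : ℕ → Fin n → V, IsPlan G r n τ Q S T) ↔
      ∃ (x : V → ℕ → ℕ) (f : V → V → ℕ → ℕ),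
        (∀ v : V, ∀ t ≤ τ, x v t ≤ 1) ∧
        (∀ u v : V, ∀ t < τ, f u v t ≤ 1) ∧
        (∀ v : V, x v 0 = 1 ↔ v ∈ S) ∧
        (∀ v : V, x v τ = 1 ↔ v ∈ T) ∧
        (∀ u v : V, ∀ t < τ, v ∉ insert u (G.neighborFinset u) → f u v t = 0) ∧
        (∀ t < τ, ∀ u : V, ∑ v ∈ insert u (G.neighborFinset u), f u v t = x u t) ∧
        (∀ t, 1 ≤ t → t ≤ τ → ∀ u : V,
          ∑ v ∈ insert u (G.neighborFinset u), f v u (t - 1) = x u t) ∧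
        (∀ t ≤ τ, ∀ u v : V, u ≠ v → G.dist u v ≤ r → x u t + x v t ≤ 1) := by
  classical
  have memsym : ∀ u v : V, v ∈ insert u (G.neighborFinset u) →
      u ∈ insert v (G.neighborFinset v) := by
    intro u v hv
    rcases Finset.mem_insert.1 hv with h | h
    · subst h; exact Finset.mem_insert_self _ _
    · exact Finset.mem_insert_of_mem ((G.mem_neighborFinset v u).2
        ((G.mem_neighborFinset u v).1 h).symm)
  constructor
  · rintro ⟨Q, hQ0, hQτ, hind, hmove⟩
    have hinj : ∀ k ≤ τ, Function.Injective (Q k) := by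
      intro k hk i j hij
      by_contra hne
      have := hind k hk i j hne
      rw [hij, G.dist_self] at this
      omega
    refine ⟨fun v t => if ∃ i, Q t i = v then 1 else 0,
      fun u v t => if ∃ i, Q t i = u ∧ Q (t + 1) i = v then 1 else 0,
      ?_, ?_, ?_, ?_, ?_, ?_, ?_, ?_⟩
    · intro v t _; dsimp only; split <;> omega
    · intro u v t _; dsimp only; split <;> omega
    · intro v
      dsimp only
      have hiff : (∃ i, Q 0 i = v) ↔ v ∈ S := by rw [← hQ0, Set.mem_range]
      by_cases hv : v ∈ S <;> simp [hiff, hv]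
    · intro v
      dsimp only
      have hiff : (∃ i, Q τ i = v) ↔ v ∈ T := by rw [← hQτ, Set.mem_range]
      by_cases hv : v ∈ T <;> simp [hiff, hv]
    · intro u v t ht hv
      dsimp only
      rw [if_neg]
      rintro ⟨i, rfl, rfl⟩
      rcases hmove t ht i with h | h
      · exact hv (h ▸ Finset.mem_insert_self _ _)
      · exact hv (Finset.mem_insert_of_mem ((G.mem_neighborFinset _ _).2 h))
    · intro t ht u
      dsimp only
      by_cases h : ∃ i, Q t i = u
      · obtain ⟨i, hi⟩ := h
        have key : ∀ v, (if ∃ j, Q t j = u ∧ Q (t + 1) j = v then 1 else 0) =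
            if v = Q (t + 1) i then 1 else 0 := by
          intro v
          congr 1
          simp only [eq_iff_iff]
          constructor
          · rintro ⟨j, hj, rfl⟩
            have : j = i := hinj t (le_of_lt ht) (hj.trans hi.symm)
            rw [this]
          · rintro rfl; exact ⟨i, hi, rfl⟩
        rw [Finset.sum_congr rfl fun v _ => key v, Finset.sum_ite_eq']
        have hmem : Q (t + 1) i ∈ insert u (G.neighborFinset u) := by
          rcases hmove t ht i with h | h
          · rw [h, hi]; exact Finset.mem_insert_self _ _
          · rw [← hi]; exact Finset.mem_insert_of_mem ((G.mem_neighborFinset _ _).2 h)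
        rw [if_pos hmem, if_pos ⟨i, hi⟩]
      · rw [if_neg h]
        refine Finset.sum_eq_zero fun v _ => ?_
        rw [if_neg]
        rintro ⟨j, hj, -⟩
        exact h ⟨j, hj⟩
    · intro t ht1 htτ u
      dsimp only
      obtain ⟨t', rfl⟩ : ∃ t', t = t' + 1 := ⟨t - 1, by omega⟩
      simp only [Nat.add_sub_cancel]
      by_cases h : ∃ i, Q (t' + 1) i = u
      · obtain ⟨i, hi⟩ := h
        have key : ∀ v, (if ∃ j, Q t' j = v ∧ Q (t' + 1) j = u then 1 else 0) =
            if v = Q t' i then 1 else 0 := by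
          intro v
          congr 1
          simp only [eq_iff_iff]
          constructor
          · rintro ⟨j, rfl, hj⟩
            have : j = i := hinj (t' + 1) htτ (hj.trans hi.symm)
            rw [this]
          · rintro rfl; exact ⟨i, rfl, hi⟩
        rw [Finset.sum_congr rfl fun v _ => key v, Finset.sum_ite_eq']
        have hmem : Q t' i ∈ insert u (G.neighborFinset u) := by
          refine memsym _ _ ?_
          rcases hmove t' (by omega) i with h | h
          · rw [← hi, h]; exact Finset.mem_insert_self _ _
          · exact Finset.mem_insert_of_mem ((G.mem_neighborFinset _ _).2 (hi ▸ h))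
        rw [if_pos hmem, if_pos ⟨i, hi⟩]
      · rw [if_neg h]
        refine Finset.sum_eq_zero fun v _ => ?_
        rw [if_neg]
        rintro ⟨j, -, hj⟩
        exact h ⟨j, hj⟩
    · intro t ht u v huv hd
      dsimp only
      by_cases hu : ∃ i, Q t i = u
      · by_cases hv : ∃ i, Q t i = v
        · exfalso
          obtain ⟨i, rfl⟩ := hu
          obtain ⟨j, rfl⟩ := hv
          have hij : i ≠ j := fun h => huv (by rw [h])
          have := hind t ht i j hij
          omega
        · rw [if_neg hv]; split <;> omega
      · rw [if_neg hu]; split <;> omega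
  · rintro ⟨x, f, h1, h2, h3, h4, h5, h6, h7, h8⟩
    -- enumerate S
    haveI : Fintype S := S.toFinite.fintype
    have hcard : Fintype.card S = n := by
      rw [← Nat.card_eq_fintype_card, Nat.card_coe_set_eq, hS]
    let e : Fin n ≃ S := (Fintype.equivFinOfCardEq hcard).symm
    -- the step function
    let next : ℕ → V → V := fun t u =>
      if h : ∃ v ∈ insert u (G.neighborFinset u), f u v t = 1 then h.choose else u
    have next_spec : ∀ t < τ, ∀ u, x u t = 1 →
        next t u ∈ insert u (G.neighborFinset u) ∧ f u (next t u) t = 1 := by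
      intro t ht u hu
      have hsum : ∑ v ∈ insert u (G.neighborFinset u), f u v t = 1 := (h6 t ht u).trans hu
      have hex : ∃ v ∈ insert u (G.neighborFinset u), f u v t = 1 := by
        obtain ⟨v, hv, hvne⟩ := Finset.exists_ne_zero_of_sum_ne_zero (hsum ▸ one_ne_zero)
        exact ⟨v, hv, le_antisymm (h2 u v t ht) (by omega)⟩
      simp only [next, dif_pos hex]
      exact ⟨hex.choose_spec.1, hex.choose_spec.2⟩
    obtain ⟨Q, hQ0, hQs⟩ : ∃ Q : ℕ → Fin n → V, (∀ i, Q 0 i = (e i : V)) ∧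
        ∀ t i, Q (t + 1) i = next t (Q t i) :=
      ⟨fun t i => Nat.rec (e i : V) (fun t v => next t v) t,
        fun _ => rfl, fun _ _ => rfl⟩
    -- invariant
    have inv : ∀ t ≤ τ, (∀ i, x (Q t i) t = 1) ∧ Function.Injective (Q t) := by
      intro t
      induction t with
      | zero =>
        intro _
        constructor
        · intro i; rw [hQ0]; exact (h3 _).2 (e i).2
        · intro i j hij
          rw [hQ0 i, hQ0 j] at hij
          exact e.injective (Subtype.ext hij)
      | succ t ih =>
        intro ht
        obtain ⟨hocc, hinj⟩ := ih (by omega)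
        have hstep : ∀ i : Fin n, Q (t + 1) i ∈
            (insert (Q t i) (G.neighborFinset (Q t i)) : Finset V) ∧
            f (Q t i) (Q (t + 1) i) t = 1 := fun i => by
          rw [hQs t i]; exact next_spec t (by omega) _ (hocc i)
        have hocc' : ∀ i, x (Q (t + 1) i) (t + 1) = 1 := by
          intro i
          obtain ⟨hmem, hf⟩ := hstep i
          have hin := h7 (t + 1) (by omega) ht (Q (t + 1) i)
          simp only [Nat.add_sub_cancel] at hin
          have hle : f (Q t i) (Q (t + 1) i) t ≤
              ∑ w ∈ insert (Q (t+1) i) (G.neighborFinset (Q (t+1) i)), f w (Q (t+1) i) t :=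
            Finset.single_le_sum (f := fun w => f w (Q (t + 1) i) t)
              (fun _ _ => Nat.zero_le _) (memsym _ _ hmem)
          have := h1 (Q (t + 1) i) (t + 1) ht
          omega
        refine ⟨hocc', fun i j hij => ?_⟩
        rcases eq_or_ne (Q t i) (Q t j) with hQQ | hQQ
        · exact hinj hQQ
        · exfalso
          obtain ⟨hmi, hfi⟩ := hstep i
          obtain ⟨hmj, hfj⟩ := hstep j
          rw [← hij] at hmj hfj
          have hin := h7 (t + 1) (by omega) ht (Q (t + 1) i)
          simp only [Nat.add_sub_cancel] at hin
          have h2le : f (Q t i) (Q (t + 1) i) t + f (Q t j) (Q (t + 1) i) t ≤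
              ∑ w ∈ insert (Q (t + 1) i) (G.neighborFinset (Q (t + 1) i)),
                f w (Q (t + 1) i) t :=
            Finset.add_le_sum (f := fun w => f w (Q (t + 1) i) t)
              (fun _ _ => Nat.zero_le _) (memsym _ _ hmi) (memsym _ _ hmj) hQQ
          have := h1 (Q (t + 1) i) (t + 1) ht
          omega
    refine ⟨Q, ?_, ?_, ?_, ?_⟩
    · ext v
      simp only [Set.mem_range]
      constructor
      · rintro ⟨i, rfl⟩; rw [hQ0]; exact (e i).2
      · intro hv; exact ⟨e.symm ⟨v, hv⟩, by simp [hQ0]⟩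
    · have hsub : Set.range (Q τ) ⊆ T := by
        rintro v ⟨i, rfl⟩
        exact (h4 _).1 ((inv τ le_rfl).1 i)
      refine Set.eq_of_subset_of_ncard_le hsub ?_ (Set.toFinite _)
      rw [hT, ← Nat.card_coe_set_eq, Nat.card_range_of_injective (inv τ le_rfl).2,
        Nat.card_eq_fintype_card, Fintype.card_fin]
    · intro k hk i j hij
      by_contra hd
      push_neg at hd
      have hne : Q k i ≠ Q k j := fun h => hij ((inv k hk).2 h)
      have := h8 k hk (Q k i) (Q k j) hne (by omega)
      have h1' := (inv k hk).1 i
      have h2' := (inv k hk).1 j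
      omega
    · intro k hk i
      have := (next_spec k hk (Q k i) ((inv k (le_of_lt hk)).1 i)).1
      rw [← hQs] at this
      rcases Finset.mem_insert.1 this with h | h
      · exact Or.inl h
      · exact Or.inr ((G.mem_neighborFinset _ _).1 h)
end
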